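/- arXiv:math/0501171 — 7 statements merged into one kernel-verified Lean document; each statement's English description precedes it below -/
import Mathlib

section
/- For every positive integer n, n divides the sum over all divisors d of n of φ(d)·2^(n/d). -/
open Finset AddAction

section
variable {n : ℕ}

instance shiftAction (n : ℕ) : AddAction (ZMod n) (ZMod n → Bool) where
  vadd g f := fun x => f (x + g)
  zero_vadd f := by funext x; show f (x + 0) = f x; rw [add_zero]
  add_vadd g h f := by funext x; show f (x + (g + h)) = f (x + g + h); rw [add_assoc]

@[simp] lemma shift_vadd_apply (g : ZMod n) (f : ZMod n → Bool) (x : ZMod n) :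
    (g +ᵥ f) x = f (x + g) := rfl

lemma stab_gcd [NeZero n] (g : ZMod n) (f : ZMod n → Bool) :
    g ∈ stabilizer (ZMod n) f ↔ ((Nat.gcd g.val n : ℕ) : ZMod n) ∈ stabilizer (ZMod n) f := by
  constructor
  · intro hg
    have hb := Nat.gcd_eq_gcd_ab g.val n
    have : ((Nat.gcd g.val n : ℕ) : ZMod n) = (Nat.gcdA g.val n : ℤ) • g := by
      have : (((g.val : ℤ) * Nat.gcdA g.val n + (n : ℤ) * Nat.gcdB g.val n : ℤ) : ZMod n)
          = ((Nat.gcd g.val n : ℕ) : ZMod n) := by rw [← hb]; push_cast; ring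
      rw [← this]
      push_cast [zsmul_eq_mul]
      have hg' : ((g.val : ℕ) : ZMod n) = g := ZMod.natCast_rightInverse g
      rw [hg', mul_comm]
      simp [ZMod.natCast_self]
    rw [this]
    exact AddSubgroup.zsmul_mem _ hg _
  · intro hd
    have hdvd : Nat.gcd g.val n ∣ g.val := Nat.gcd_dvd_left _ _
    have : g = (g.val / Nat.gcd g.val n) • ((Nat.gcd g.val n : ℕ) : ZMod n) := by
      rw [nsmul_eq_mul]
      rw [← Nat.cast_mul, Nat.div_mul_cancel hdvd, ZMod.natCast_val, ZMod.cast_id]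
    rw [this]
    exact AddSubgroup.nsmul_mem _ hd _

lemma aux_step (d : ℕ) (f : ZMod n → Bool) (hf : ∀ x, f (x + (d : ZMod n)) = f x)
    (r k : ℕ) : f ((r + d * k : ℕ) : ZMod n) = f (r : ℕ) := by
  induction k with
  | zero => simp
  | succ k ih =>
      have : ((r + d * (k+1) : ℕ) : ZMod n) = ((r + d * k : ℕ) : ZMod n) + (d : ZMod n) := by
        push_cast; ring
      rw [this, hf, ih]

lemma card_fixed [NeZero n] (g : ZMod n) :
    Nat.card (fixedBy (ZMod n → Bool) g) = 2 ^ Nat.gcd g.val n := by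
  classical
  set d := Nat.gcd g.val n with hd
  have hdn : d ∣ n := Nat.gcd_dvd_right _ _
  have hdpos : 0 < d := Nat.gcd_pos_of_pos_right _ (Nat.pos_of_ne_zero (NeZero.ne n))
  haveI : NeZero d := ⟨hdpos.ne'⟩
  have hset : fixedBy (ZMod n → Bool) g = fixedBy (ZMod n → Bool) ((d : ℕ) : ZMod n) := by
    ext f
    simp only [mem_fixedBy]
    rw [← mem_stabilizer_iff, ← mem_stabilizer_iff, stab_gcd]
  rw [hset]
  have e : (fixedBy (ZMod n → Bool) ((d : ℕ) : ZMod n)) ≃ (ZMod d → Bool) := by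
    refine ⟨fun f y => f.1 ((y.val : ℕ) : ZMod n),
      fun h => ⟨fun x => h (ZMod.castHom hdn (ZMod d) x), ?_⟩, ?_, ?_⟩
    · rw [mem_fixedBy]
      funext x
      simp only [shift_vadd_apply, map_add, map_natCast, ZMod.natCast_self, add_zero]
    · rintro ⟨f, hf⟩
      have hfix : ∀ x, f (x + (d : ZMod n)) = f x := by
        intro x
        have := congrFun (mem_fixedBy.mp hf) x
        simpa using this
      ext x
      simp only []
      have hx : ((x.val : ℕ) : ZMod n) = x := ZMod.natCast_rightInverse x
      have h1 : (ZMod.castHom hdn (ZMod d) x) = ((x.val : ℕ) : ZMod d) := by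
        conv_lhs => rw [← hx]
        rw [map_natCast]
      rw [h1, ZMod.val_natCast]
      have h2 : f ((x.val % d : ℕ) : ZMod n) = f x := by
        conv_rhs => rw [← hx, ← Nat.mod_add_div x.val d]
        exact (aux_step d f hfix (x.val % d) (x.val / d)).symm
      exact h2
    · intro h
      funext y
      simp only []
      have : (ZMod.castHom hdn (ZMod d) ((y.val : ℕ) : ZMod n)) = y := by
        rw [map_natCast]
        exact ZMod.natCast_rightInverse y
      rw [this]
  rw [Nat.card_congr e]
  simp [Nat.card_eq_fintype_card, ZMod.card]

end

theorem dvd_sum_totient_two_pow (n : ℕ) (hn : 0 < n) :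
    n ∣ ∑ d ∈ n.divisors, Nat.totient d * 2 ^ (n / d) := by
  classical
  haveI : NeZero n := ⟨hn.ne'⟩
  have burnside := AddAction.sum_card_fixedBy_eq_card_orbits_mul_card_addGroup
      (ZMod n) (ZMod n → Bool)
  have hcard : Fintype.card (ZMod n) = n := ZMod.card n
  have hdvd : n ∣ ∑ g : ZMod n, Fintype.card (AddAction.fixedBy (ZMod n → Bool) g) := by
    rw [burnside, hcard]; exact dvd_mul_left n _
  have hsum : (∑ g : ZMod n, Fintype.card (AddAction.fixedBy (ZMod n → Bool) g))
      = ∑ d ∈ n.divisors, Nat.totient d * 2 ^ (n / d) := by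
    have h1 : ∀ g : ZMod n, Fintype.card (AddAction.fixedBy (ZMod n → Bool) g)
        = 2 ^ Nat.gcd (ZMod.val g) n := by
      intro g
      rw [← Nat.card_eq_fintype_card, card_fixed]
    rw [Finset.sum_congr rfl fun g _ => h1 g]
    -- reindex over range n
    have h2 : (∑ g : ZMod n, 2 ^ Nat.gcd (ZMod.val g) n)
        = ∑ k ∈ Finset.range n, 2 ^ Nat.gcd n k := by
      refine Finset.sum_nbij' (fun g => g.val) (fun k => (k : ZMod n)) ?_ ?_ ?_ ?_ ?_
      · intro g _; exact Finset.mem_range.mpr (ZMod.val_lt g)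
      · intro k _; exact Finset.mem_univ _
      · intro g _; exact ZMod.natCast_rightInverse g
      · intro k hk; exact ZMod.val_cast_of_lt (Finset.mem_range.mp hk)
      · intro g _; rw [Nat.gcd_comm]
    rw [h2]
    have h3 : (∑ k ∈ Finset.range n, 2 ^ Nat.gcd n k)
        = ∑ d ∈ n.divisors, Nat.totient (n / d) * 2 ^ d := by
      rw [← Finset.sum_fiberwise_of_maps_to (g := fun k => Nat.gcd n k)
        (t := n.divisors) (fun k _ => Nat.mem_divisors.mpr ⟨Nat.gcd_dvd_left _ _, hn.ne'⟩)]
      refine Finset.sum_congr rfl fun d hd => ?_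
      have hdn : d ∣ n := Nat.dvd_of_mem_divisors hd
      rw [Nat.totient_div_of_dvd hdn]
      rw [Finset.sum_congr rfl (fun k hk => by
        rw [(Finset.mem_filter.mp hk).2])]
      rw [Finset.sum_const, smul_eq_mul]
    rw [h3, ← Nat.sum_div_divisors n (fun d => Nat.totient d * 2 ^ (n / d))]
    refine Finset.sum_congr rfl fun d hd => ?_
    rw [Nat.div_div_self (Nat.dvd_of_mem_divisors hd) hn.ne']
  rw [← hsum]
  exact hdvd
end

section
/- For odd n ≥ 3, the number of subsets S of ZMod n of even positive cardinality, counted up to rotation (i.e., the number of orbits of such subsets under the rotation action of ZMod n), equals (1/n)·Σ_{d|n} (2^(n/d - 1) - 1)·φ(d). -/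
open Finset

instance cfAddAction (n : ℕ) :
    AddAction (ZMod n) {S : Finset (ZMod n) // S.Nonempty ∧ Even S.card} where
  vadd g S := ⟨S.1.image (· + g), S.2.1.image _, by
    classical
    rw [Finset.card_image_of_injective _ (add_left_injective g)]
    exact S.2.2⟩
  zero_vadd S := by
    apply Subtype.ext
    show S.1.image (· + 0) = S.1
    simp
  add_vadd g h S := by
    apply Subtype.ext
    show S.1.image (· + (g + h)) = (S.1.image (· + h)).image (· + g)
    rw [Finset.image_image]
    apply Finset.image_congr
    intro x _
    show x + (g + h) = x + h + g
    abel


lemma cf_card_evenNonempty (Q : Type*) [Fintype Q] [DecidableEq Q] (hQ : 0 < Fintype.card Q) :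
    Nat.card {T : Finset Q // T.Nonempty ∧ Even T.card} = 2 ^ (Fintype.card Q - 1) - 1 := by
  classical
  obtain ⟨a⟩ : Nonempty Q := Fintype.card_pos_iff.mp hQ
  have key : (univ.filter fun T : Finset Q => Even T.card).card
      = (univ.filter fun T : Finset Q => ¬ Even T.card).card := by
    apply Finset.card_bij' (fun T _ => if a ∈ T then T.erase a else insert a T)
      (fun T _ => if a ∈ T then T.erase a else insert a T)
    · intro T _
      by_cases h : a ∈ T
      · rw [if_pos h, if_neg (Finset.notMem_erase a T), Finset.insert_erase h]
      · rw [if_neg h, if_pos (Finset.mem_insert_self a T), Finset.erase_insert h]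
    · intro T _
      by_cases h : a ∈ T
      · rw [if_pos h, if_neg (Finset.notMem_erase a T), Finset.insert_erase h]
      · rw [if_neg h, if_pos (Finset.mem_insert_self a T), Finset.erase_insert h]
    · intro T hT
      simp only [mem_filter, mem_univ, true_and] at hT ⊢
      by_cases h : a ∈ T
      · rw [if_pos h, Finset.card_erase_of_mem h]
        have h1 : 1 ≤ T.card := Finset.card_pos.mpr ⟨a, h⟩
        rw [Nat.even_iff] at hT ⊢
        omega
      · rw [if_neg h, Finset.card_insert_of_notMem h]
        rw [Nat.even_iff] at hT ⊢
        omega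
    · intro T hT
      simp only [mem_filter, mem_univ, true_and] at hT ⊢
      by_cases h : a ∈ T
      · rw [if_pos h, Finset.card_erase_of_mem h]
        rw [Nat.even_iff] at hT ⊢
        have h1 : 1 ≤ T.card := Finset.card_pos.mpr ⟨a, h⟩
        omega
      · rw [if_neg h, Finset.card_insert_of_notMem h]
        rw [Nat.even_iff] at hT ⊢
        omega
  have total : (univ.filter fun T : Finset Q => Even T.card).card
      + (univ.filter fun T : Finset Q => ¬ Even T.card).card = 2 ^ Fintype.card Q := by
    rw [Finset.card_filter_add_card_filter_not]
    simp [Fintype.card_finset]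
  have heven : (univ.filter fun T : Finset Q => Even T.card).card = 2 ^ (Fintype.card Q - 1) := by
    have h2 : 2 ^ Fintype.card Q = 2 * 2 ^ (Fintype.card Q - 1) := by
      rw [← pow_succ']
      congr 1
      omega
    omega
  have hset : (univ.filter fun T : Finset Q => T.Nonempty ∧ Even T.card)
      = (univ.filter fun T : Finset Q => Even T.card).erase ∅ := by
    ext T
    simp [Finset.nonempty_iff_ne_empty, and_comm, ne_comm]
  rw [Nat.card_eq_fintype_card, Fintype.card_subtype, hset,
    Finset.card_erase_of_mem (by simp), heven]

lemma cf_card_fixed (n : ℕ) [NeZero n] (hodd : Odd n) (g : ZMod n) :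
    Nat.card {S : Finset (ZMod n) // (S.Nonempty ∧ Even S.card) ∧ S.image (· + g) = S} =
      2 ^ (n / addOrderOf g - 1) - 1 := by
  classical
  set H := AddSubgroup.zmultiples g with hH
  set d := addOrderOf g with hd
  have hdpos : 0 < d := addOrderOf_pos g
  have hdvd : d ∣ n := by
    have := addOrderOf_dvd_card (x := g)
    rwa [ZMod.card] at this
  have hnpos : 0 < n := Nat.pos_of_ne_zero (NeZero.ne n)
  set Q := ZMod n ⧸ H with hQ
  set π : ZMod n → Q := QuotientAddGroup.mk with hπ
  have hπsurj : Function.Surjective π := Quot.exists_rep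
  have hπeq : ∀ x y : ZMod n, π x = π y ↔ -x + y ∈ H := fun x y => QuotientAddGroup.eq
  have hπg : ∀ x : ZMod n, π (x + g) = π x := by
    intro x
    rw [hπeq]
    have : -(x + g) + x = -g := by abel
    rw [this]
    exact neg_mem (AddSubgroup.mem_zmultiples g)
  -- closure of fixed sets under the coset relation
  have hclosed : ∀ S : Finset (ZMod n), S.image (· + g) = S →
      ∀ x y : ZMod n, y ∈ S → π x = π y → x ∈ S := by
    intro S hfix x y hy hxy
    have hstep : ∀ z : ZMod n, z ∈ S ↔ z + g ∈ S := by
      intro z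
      constructor
      · intro hz
        rw [← hfix]
        exact Finset.mem_image_of_mem _ hz
      · intro hz
        rw [← hfix] at hz
        obtain ⟨w, hw, hwz⟩ := Finset.mem_image.mp hz
        have : w = z := by
          have := add_right_cancel hwz
          exact this
        rwa [← this]
    have hnsmul : ∀ m : ℕ, ∀ z : ZMod n, z ∈ S → z + m • g ∈ S := by
      intro m
      induction m with
      | zero => intro z hz; simpa using hz
      | succ k ih =>
        intro z hz
        have : z + (k + 1) • g = (z + k • g) + g := by
          rw [succ_nsmul]; abel
        rw [this]
        exact (hstep _).mp (ih z hz)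
    -- obtain integer multiple
    rw [hπeq] at hxy
    obtain ⟨k, hk⟩ := AddSubgroup.mem_zmultiples_iff.mp hxy
    -- x = y + (-k) • g ... careful: -x + y = k • g, so x = y + (-k) • g
    have hx : x = y + (-k) • g := by
      have : x = y - k • g := by
        rw [hk]; abel
      rw [this, neg_zsmul]; abel
    set k' := (-k) % (d : ℤ) with hk'
    have hk'eq : k' • g = (-k) • g := by
      rw [hk', hd]
      exact mod_addOrderOf_zsmul g (-k)
    have hk'nonneg : 0 ≤ k' := Int.emod_nonneg _ (by exact_mod_cast hdpos.ne')
    have hx2 : x = y + k'.toNat • g := by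
      rw [hx, ← hk'eq, ← natCast_zsmul, Int.toNat_of_nonneg hk'nonneg]
    rw [hx2]
    exact hnsmul _ _ hy
  -- fiber cardinality
  have hfiber : ∀ t : Q, (univ.filter fun x : ZMod n => π x = t).card = d := by
    intro t
    obtain ⟨x0, rfl⟩ := hπsurj t
    have : (univ.filter fun x : ZMod n => π x = π x0).card
        = Nat.card {x : ZMod n // π x = π x0} := by
      rw [Nat.card_eq_fintype_card, Fintype.card_subtype]
    rw [this]
    have e : {x : ZMod n // π x = π x0} ≃ H := by
      refine ⟨fun x => ⟨x.1 - x0, ?_⟩, fun h => ⟨x0 + h.1, ?_⟩, ?_, ?_⟩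
      · have hm := (hπeq _ _).mp x.2
        have : x.1 - x0 = -(-x.1 + x0) := by abel
        rw [this]
        exact neg_mem hm
      · rw [hπeq]
        have : -(x0 + h.1) + x0 = -h.1 := by abel
        rw [this]
        exact neg_mem h.2
      · intro x; apply Subtype.ext; simp
      · intro h; apply Subtype.ext; simp
    rw [Nat.card_congr e, hH, Nat.card_zmultiples]
  -- card of quotient
  have hQcard : Nat.card Q = n / d := by
    have hHcard : Nat.card H = d := by
      rw [hH, hd]; exact Nat.card_zmultiples g
    have := AddSubgroup.card_eq_card_quotient_mul_card_addSubgroup (s := H)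
    rw [Nat.card_zmod, hHcard] at this
    rw [hQ]
    exact (Nat.div_eq_of_eq_mul_left hdpos this).symm
  have hQpos : 0 < Nat.card Q := by
    rw [hQcard]
    exact Nat.div_pos (Nat.le_of_dvd hnpos hdvd) hdpos
  -- d is odd
  have hdodd : ¬ Even d := by
    intro hE
    obtain ⟨c, hc⟩ := hdvd
    have : Even n := by rw [hc]; exact hE.mul_right c
    exact (Nat.not_even_iff_odd.mpr hodd) this
  -- card formula for fixed sets
  have hcards : ∀ S : Finset (ZMod n), S.image (· + g) = S →
      S.card = (S.image π).card * d := by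
    intro S hfix
    rw [Finset.card_eq_sum_card_fiberwise (fun x hx => Finset.mem_image_of_mem π hx)]
    rw [Finset.sum_congr rfl (fun t ht => ?_), Finset.sum_const, smul_eq_mul]
    have hfull : S.filter (fun x => π x = t) = univ.filter (fun x => π x = t) := by
      obtain ⟨y, hy, rfl⟩ := Finset.mem_image.mp ht
      ext x
      simp only [mem_filter, mem_univ, true_and, and_iff_right_iff_imp]
      intro hx
      exact hclosed S hfix x y hy hx
    rw [hfull, hfiber]
  -- image of preimage
  have himg_pre : ∀ T : Finset Q, (univ.filter fun x => π x ∈ T).image π = T := by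
    intro T
    ext t
    simp only [Finset.mem_image, mem_filter, mem_univ, true_and]
    constructor
    · rintro ⟨x, hx, rfl⟩; exact hx
    · intro ht
      obtain ⟨x, rfl⟩ := hπsurj t
      exact ⟨x, ht, rfl⟩
  -- preimage is fixed
  have hpre_fixed : ∀ T : Finset Q,
      (univ.filter fun x => π x ∈ T).image (· + g) = univ.filter fun x => π x ∈ T := by
    intro T
    ext y
    simp only [Finset.mem_image, mem_filter, mem_univ, true_and]
    constructor
    · rintro ⟨x, hx, rfl⟩
      rwa [hπg]
    · intro hy
      refine ⟨y - g, ?_, by abel⟩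
      have : π (y - g + g) = π (y - g) := hπg _
      rw [show y - g + g = y by abel] at this
      rwa [← this]
  -- the main equivalence
  have e2 : {S : Finset (ZMod n) // (S.Nonempty ∧ Even S.card) ∧ S.image (· + g) = S}
      ≃ {T : Finset Q // T.Nonempty ∧ Even T.card} := by
    refine ⟨fun S => ⟨S.1.image π, S.2.1.1.image π, ?_⟩,
      fun T => ⟨univ.filter fun x => π x ∈ T.1, ⟨⟨?_, ?_⟩, hpre_fixed T.1⟩⟩, ?_, ?_⟩
    · have := hcards S.1 S.2.2
      have hev := S.2.1.2
      rw [this, Nat.even_mul] at hev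
      tauto
    · -- nonempty
      obtain ⟨t, ht⟩ := T.2.1
      obtain ⟨x, rfl⟩ := hπsurj t
      exact ⟨x, by simp [ht]⟩
    · -- even
      have := hcards _ (hpre_fixed T.1)
      rw [himg_pre] at this
      rw [this, Nat.even_mul]
      exact Or.inl T.2.2
    · -- left inverse
      intro S
      apply Subtype.ext
      have hfix := S.2.2
      ext x
      simp only [mem_filter, mem_univ, true_and, Finset.mem_image]
      constructor
      · rintro ⟨y, hy, hxy⟩
        exact hclosed S.1 hfix x y hy hxy.symm
      · intro hx
        exact ⟨x, hx, rfl⟩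
    · -- right inverse
      intro T
      apply Subtype.ext
      exact himg_pre T.1
  rw [Nat.card_congr e2, cf_card_evenNonempty Q (by rwa [← Nat.card_eq_fintype_card]),
    ← Nat.card_eq_fintype_card, hQcard]

theorem count_footprints_odd (n : ℕ) (hodd : Odd n) (h3 : 3 ≤ n) :
    Nat.card (Quot (fun S T : {S : Finset (ZMod n) // S.Nonempty ∧ Even S.card} =>
        ∃ g : ZMod n, S.1.image (· + g) = T.1)) * n =
      ∑ d ∈ n.divisors, (2 ^ (n / d - 1) - 1) * Nat.totient d := by
  classical
  haveI : NeZero n := ⟨by omega⟩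
  haveI : ∀ a : ZMod n,
      Fintype (AddAction.fixedBy {S : Finset (ZMod n) // S.Nonempty ∧ Even S.card} a) :=
    fun a => Fintype.ofFinite _
  haveI : Fintype (Quotient (AddAction.orbitRel (ZMod n)
      {S : Finset (ZMod n) // S.Nonempty ∧ Even S.card})) := Fintype.ofFinite _
  have hcancel : ∀ (s : Finset (ZMod n)) (g : ZMod n), (s.image (· + g)).image (· + (-g)) = s := by
    intro s g
    rw [Finset.image_image]
    have : ((· + (-g)) ∘ (· + g)) = fun x : ZMod n => x := by
      funext x
      simp
    rw [this, Finset.image_id']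
  have hiff : ∀ a b : {S : Finset (ZMod n) // S.Nonempty ∧ Even S.card},
      (∃ g : ZMod n, a.1.image (· + g) = b.1) ↔
      (AddAction.orbitRel (ZMod n) {S : Finset (ZMod n) // S.Nonempty ∧ Even S.card}).r a b := by
    intro a b
    rw [AddAction.orbitRel_apply, AddAction.mem_orbit_iff]
    constructor
    · rintro ⟨g, hg⟩
      refine ⟨-g, ?_⟩
      apply Subtype.ext
      show b.1.image (· + (-g)) = a.1
      rw [← hg, hcancel]
    · rintro ⟨g, hg⟩
      refine ⟨-g, ?_⟩
      have hg' : b.1.image (· + g) = a.1 := Subtype.ext_iff.mp hg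
      rw [← hg', hcancel]
  have hquot : Nat.card (Quot (fun S T : {S : Finset (ZMod n) // S.Nonempty ∧ Even S.card} =>
        ∃ g : ZMod n, S.1.image (· + g) = T.1))
      = Fintype.card (Quotient (AddAction.orbitRel (ZMod n)
          {S : Finset (ZMod n) // S.Nonempty ∧ Even S.card})) := by
    rw [← Nat.card_eq_fintype_card]
    exact Nat.card_congr (Quot.congrRight hiff)
  have hfix : ∀ a : ZMod n,
      Fintype.card (AddAction.fixedBy {S : Finset (ZMod n) // S.Nonempty ∧ Even S.card} a)
        = 2 ^ (n / addOrderOf a - 1) - 1 := by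
    intro a
    rw [← Nat.card_eq_fintype_card, ← cf_card_fixed n hodd a]
    apply Nat.card_congr
    refine ⟨fun x => ⟨x.1.1, ⟨x.1.2, ?_⟩⟩, fun S => ⟨⟨S.1, S.2.1⟩, ?_⟩, fun x => rfl, fun S => rfl⟩
    · exact Subtype.ext_iff.mp x.2
    · exact Subtype.ext S.2.2
  have hmaps : ∀ x : ZMod n, x ∈ (univ : Finset (ZMod n)) → addOrderOf x ∈ n.divisors := by
    intro x _
    rw [Nat.mem_divisors]
    refine ⟨?_, by omega⟩
    have := addOrderOf_dvd_card (x := x)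
    rwa [ZMod.card] at this
  have hsum : ∑ a : ZMod n, (2 ^ (n / addOrderOf a - 1) - 1)
      = ∑ d ∈ n.divisors, (2 ^ (n / d - 1) - 1) * d.totient := by
    rw [← Finset.sum_fiberwise_of_maps_to hmaps (fun a => 2 ^ (n / addOrderOf a - 1) - 1)]
    refine Finset.sum_congr rfl fun d hd => ?_
    have hcount : (univ.filter fun a : ZMod n => addOrderOf a = d).card = d.totient := by
      have hdvd2 : d ∣ Fintype.card (ZMod n) := by
        rw [ZMod.card]; exact (Nat.mem_divisors.mp hd).1
      exact IsAddCyclic.card_addOrderOf_eq_totient hdvd2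
    calc ∑ a ∈ univ.filter (fun a : ZMod n => addOrderOf a = d), (2 ^ (n / addOrderOf a - 1) - 1)
        = ∑ _a ∈ univ.filter (fun a : ZMod n => addOrderOf a = d), (2 ^ (n / d - 1) - 1) :=
          Finset.sum_congr rfl fun a ha => by rw [(Finset.mem_filter.mp ha).2]
      _ = _ := by rw [Finset.sum_const, hcount, smul_eq_mul, mul_comm]
  have hb := AddAction.sum_card_fixedBy_eq_card_orbits_mul_card_addGroup (ZMod n)
    {S : Finset (ZMod n) // S.Nonempty ∧ Even S.card}
  rw [hquot]
  calc Fintype.card (Quotient (AddAction.orbitRel (ZMod n)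
          {S : Finset (ZMod n) // S.Nonempty ∧ Even S.card})) * n
      = Fintype.card (Quotient (AddAction.orbitRel (ZMod n)
          {S : Finset (ZMod n) // S.Nonempty ∧ Even S.card})) * Fintype.card (ZMod n) := by
        rw [ZMod.card]
    _ = ∑ a : ZMod n, Fintype.card
          (AddAction.fixedBy {S : Finset (ZMod n) // S.Nonempty ∧ Even S.card} a) := hb.symm
    _ = ∑ a : ZMod n, (2 ^ (n / addOrderOf a - 1) - 1) :=
        Finset.sum_congr rfl (fun a _ => hfix a)
    _ = _ := hsum
end

section
/- For any positive integer n, n divides Σ_{d|n} (2^(n/d - 1) - 1)·φ(d) when n is odd. -/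
/-!
Let the cyclic group `ZMod n` act on the colourings `ZMod n → Fin a` by rotation. Rotation by `k`
fixes exactly the colourings that factor through `ZMod n ⧸ ⟨k⟩`, a group of order `gcd(n, k)`,
so Burnside's lemma gives `n · #orbits = ∑_{k < n} a ^ gcd(n, k) = ∑_{d ∣ n} φ(d) a ^ (n / d)`.
For `a = 2`, this sum equals `2 ∑_{d ∣ n} (2 ^ (n / d - 1) - 1) φ(d) + 2 ∑_{d ∣ n} φ(d)`, and
`∑_{d ∣ n} φ(d) = n`; as `n` is odd, the factor `2` can be cancelled.
-/
open Finset
open scoped Nat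

namespace ZMod

lemma index_zmultiples_eq_gcd {n : ℕ} [NeZero n] (k : ZMod n) :
    (AddSubgroup.zmultiples k).index = n.gcd k.val := by
  have hcard := (AddSubgroup.zmultiples k).card_mul_index
  rw [Nat.card_zmultiples, Nat.card_zmod, ← natCast_zmod_val k,
    addOrderOf_coe _ (NeZero.ne n)] at hcard
  have hpos : 0 < n / n.gcd k.val :=
    Nat.div_pos (Nat.gcd_le_left _ (NeZero.pos n)) (Nat.gcd_pos_of_pos_left _ (NeZero.pos n))
  refine Nat.eq_of_mul_eq_mul_left hpos ?_
  rw [natCast_zmod_val] at hcard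
  rw [hcard, Nat.div_mul_cancel (Nat.gcd_dvd_left _ _)]

lemma card_periodic {n : ℕ} [NeZero n] (α : Type*) (k : ZMod n) :
    Nat.card {f : ZMod n → α // Function.Periodic f k} = Nat.card α ^ n.gcd k.val := by
  let e : {f : ZMod n → α // Function.Periodic f k} ≃ (ZMod n ⧸ AddSubgroup.zmultiples k → α) :=
    { toFun := fun f => f.2.lift
      invFun := fun F => ⟨F ∘ (↑), fun x => by simp⟩
      left_inv := fun f => rfl
      right_inv := fun F => funext fun q => QuotientAddGroup.induction_on q fun x => rfl }
  rw [Nat.card_congr e, Nat.card_fun, ← AddSubgroup.index, index_zmultiples_eq_gcd]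

lemma sum_val_eq_sum_range {M : Type*} [AddCommMonoid M] (n : ℕ) [NeZero n] (f : ℕ → M) :
    ∑ k : ZMod n, f k.val = ∑ k ∈ range n, f k := by
  obtain ⟨m, rfl⟩ := Nat.exists_eq_succ_of_ne_zero (NeZero.ne n)
  exact Fin.sum_univ_eq_sum_range f (m + 1)

end ZMod

lemma Nat.sum_range_gcd_eq_sum_divisors_totient_smul {M : Type*} [AddCommMonoid M] (n : ℕ)
    (f : ℕ → M) :
    ∑ k ∈ range n, f (n.gcd k) = ∑ d ∈ n.divisors, φ d • f (n / d) := by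
  rcases n.eq_zero_or_pos with rfl | hn
  · simp
  have hfiber : ∑ k ∈ range n, f (n.gcd k) = ∑ d ∈ n.divisors, φ (n / d) • f d := by
    rw [← sum_fiberwise_of_maps_to (g := n.gcd) fun k _ => Nat.mem_divisors.2
      ⟨Nat.gcd_dvd_left n k, hn.ne'⟩]
    refine sum_congr rfl fun d hd => ?_
    rw [Nat.totient_div_of_dvd (Nat.dvd_of_mem_divisors hd), ← sum_const]
    exact sum_congr rfl fun k hk => by rw [(mem_filter.1 hk).2]
  rw [hfiber, ← Nat.sum_div_divisors n]
  exact sum_congr rfl fun d hd => by rw [Nat.div_div_self (Nat.dvd_of_mem_divisors hd) hn.ne']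

lemma DomAddAct.mem_fixedBy_mk_iff {G β : Type*} [AddCommMonoid G] (k : G) (f : G → β) :
    f ∈ AddAction.fixedBy (G → β) (DomAddAct.mk k) ↔ Function.Periodic f k := by
  simp only [AddAction.mem_fixedBy, funext_iff, DomAddAct.vadd_apply, Equiv.symm_apply_apply,
    vadd_eq_add, add_comm k, Function.Periodic]

theorem Nat.dvd_sum_totient_mul_pow (n a : ℕ) : n ∣ ∑ d ∈ n.divisors, φ d * a ^ (n / d) := by
  rcases eq_zero_or_neZero n with rfl | _
  · simp
  classical
  let X := ZMod n → Fin a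
  let : Fintype (ZMod n)ᵈᵃᵃ := Fintype.ofEquiv _ DomAddAct.mk
  have hfix (k : ZMod n) :
      Fintype.card (AddAction.fixedBy X (DomAddAct.mk k)) = a ^ n.gcd k.val := by
    rw [← Nat.card_eq_fintype_card, Nat.card_congr (Equiv.subtypeEquivRight
      (DomAddAct.mem_fixedBy_mk_iff k)), ZMod.card_periodic, Nat.card_fin]
  have burnside := AddAction.sum_card_fixedBy_eq_card_orbits_mul_card_addGroup (ZMod n)ᵈᵃᵃ X
  rw [← DomAddAct.mk.sum_comp, Fintype.card_congr DomAddAct.mk.symm, ZMod.card] at burnside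
  simp only [hfix, ZMod.sum_val_eq_sum_range n fun k => a ^ n.gcd k,
    Nat.sum_range_gcd_eq_sum_divisors_totient_smul, smul_eq_mul] at burnside
  exact Dvd.intro_left _ burnside.symm

theorem odd_formula_integrality_general (n : ℕ) (hodd : Odd n) :
    n ∣ ∑ d ∈ n.divisors, (2 ^ (n / d - 1) - 1) * Nat.totient d := by
  have hsum : 2 * ∑ d ∈ n.divisors, (2 ^ (n / d - 1) - 1) * φ d + 2 * ∑ d ∈ n.divisors, φ d =
      ∑ d ∈ n.divisors, φ d * 2 ^ (n / d) := by
    rw [mul_sum, mul_sum, ← sum_add_distrib]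
    refine sum_congr rfl fun d hd => ?_
    obtain ⟨j, hj⟩ : ∃ j, n / d = j + 1 :=
      Nat.exists_eq_add_one.2 (Nat.div_pos (Nat.divisor_le hd) (Nat.pos_of_mem_divisors hd))
    rw [hj, Nat.add_sub_cancel]
    zify [Nat.one_le_two_pow]
    ring
  rw [Nat.sum_totient] at hsum
  have hdvd : n ∣ 2 * ∑ d ∈ n.divisors, (2 ^ (n / d - 1) - 1) * φ d :=
    (Nat.dvd_add_left (dvd_mul_left n 2)).1 (hsum ▸ Nat.dvd_sum_totient_mul_pow n 2)
  exact hodd.coprime_two_right.dvd_of_dvd_mul_left hdvd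

theorem odd_formula_integrality (n : ℕ) (hn : 0 < n) (hodd : Odd n) :
    n ∣ ∑ d ∈ n.divisors, (2 ^ (n / d - 1) - 1) * Nat.totient d :=
  odd_formula_integrality_general n hodd
end

section
/- Let n be a positive integer and f : ZMod n → ℤ taking values in {-1,0,1} such that the nonzero values alternate in sign around the cycle (i.e., for any a < b with f(a) ≠ 0 ≠ f(b) and f(c) = 0 for all c strictly between a and b cyclically, f(a) = -f(b)). Then the number of a with f(a) = 1 equals the number of a with f(a) = -1. -/
/-!
Following each nonzero position to the next nonzero position around the cycle is injective on
the support of `f`, and by alternation it carries the `+1` positions to `-1` positions and vice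
versa. Hence each of the two sets injects into the other.
-/

open Finset

namespace ZMod

variable {n : ℕ}

/-- The distance from `a` to the next point of `s` strictly after it around the cycle; it is the
junk value `sInf ∅ = 0` when there is none, which cannot happen for `a ∈ s`. -/
noncomputable def nextGap (s : Set (ZMod n)) (a : ZMod n) : ℕ :=
  sInf {t : ℕ | 0 < t ∧ a + t ∈ s}

variable {s : Set (ZMod n)} {a b : ZMod n}

theorem add_notMem_of_lt_nextGap {j : ℕ} (hj : 0 < j) (hjs : j < nextGap s a) :
    a + j ∉ s :=
  fun h => Nat.notMem_of_lt_sInf hjs ⟨hj, h⟩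

variable [NeZero n]

theorem nextGap_spec (ha : a ∈ s) : 0 < nextGap s a ∧ a + nextGap s a ∈ s :=
  Nat.sInf_mem (s := {t : ℕ | 0 < t ∧ a + t ∈ s})
    ⟨n, Nat.pos_of_ne_zero (NeZero.ne n), by simpa using ha⟩

theorem nextGap_pos (ha : a ∈ s) : 0 < nextGap s a := (nextGap_spec ha).1

theorem add_nextGap_mem (ha : a ∈ s) : a + nextGap s a ∈ s := (nextGap_spec ha).2

theorem nextGap_le_of_add_nextGap_eq (hb : b ∈ s)
    (h : a + nextGap s a = b + nextGap s b) : nextGap s a ≤ nextGap s b := by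
  by_contra! hlt
  have hb_eq : b = a + ((nextGap s a - nextGap s b : ℕ) : ZMod n) := by
    rw [Nat.cast_sub hlt.le, ← add_sub_assoc, h, add_sub_cancel_right]
  exact add_notMem_of_lt_nextGap (Nat.sub_pos_of_lt hlt)
    (Nat.sub_lt (nextGap_pos hb |>.trans hlt) (nextGap_pos hb)) (hb_eq ▸ hb)

theorem injOn_add_nextGap (s : Set (ZMod n)) :
    Set.InjOn (fun a => a + (nextGap s a : ZMod n)) s := by
  intro a ha b hb h
  have hgap : nextGap s a = nextGap s b :=
    le_antisymm (nextGap_le_of_add_nextGap_eq hb h) (nextGap_le_of_add_nextGap_eq ha h.symm)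
  simpa only [hgap, add_left_inj] using h

theorem card_filter_eq_le_card_filter_eq_neg {α : Type*} [Zero α] [InvolutiveNeg α]
    [DecidableEq α] (f : ZMod n → α) (hnext : ∀ a, f a ≠ 0 → f (a + nextGap {a | f a ≠ 0} a) = -f a)
    {u : α} (hu : u ≠ 0) : #{a | f a = u} ≤ #{a | f a = -u} := by
  refine card_le_card_of_injOn _ ?_ ((injOn_add_nextGap {a | f a ≠ 0}).mono ?_)
  · intro a ha
    simp only [coe_filter, mem_univ, true_and, Set.mem_ofPred_eq] at ha ⊢
    rw [hnext a (ha ▸ hu), ha]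
  · intro a ha
    simp only [coe_filter, mem_univ, true_and, Set.mem_ofPred_eq] at ha ⊢
    exact ha ▸ hu

end ZMod

open ZMod

theorem alternation_equal_plus_minus_general (n : ℕ) [NeZero n] (f : ZMod n → ℤ)
    (halt : ∀ (a : ZMod n) (t : ℕ), 0 < t → f a ≠ 0 → f (a + (t : ZMod n)) ≠ 0 →
      (∀ j : ℕ, 0 < j → j < t → f (a + (j : ZMod n)) = 0) →
      f a = -f (a + (t : ZMod n))) :
    (Finset.univ.filter (fun a : ZMod n => f a = 1)).card =
      (Finset.univ.filter (fun a : ZMod n => f a = -1)).card := by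
  have hnext : ∀ a, f a ≠ 0 → f (a + nextGap {a | f a ≠ 0} a) = -f a := by
    intro a (ha : a ∈ {a | f a ≠ 0})
    have hgap := halt a _ (nextGap_pos ha) ha (add_nextGap_mem ha)
      fun j hj hjs => not_not.mp (add_notMem_of_lt_nextGap hj hjs)
    rw [hgap, neg_neg]
  refine le_antisymm (card_filter_eq_le_card_filter_eq_neg f hnext one_ne_zero) ?_
  have := card_filter_eq_le_card_filter_eq_neg f hnext (neg_ne_zero.mpr one_ne_zero)
  rwa [neg_neg] at this

theorem alternation_equal_plus_minus (n : ℕ) [NeZero n] (f : ZMod n → ℤ)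
    (hvals : ∀ a : ZMod n, f a ∈ ({-1, 0, 1} : Set ℤ))
    (halt : ∀ (a : ZMod n) (t : ℕ), 0 < t → f a ≠ 0 → f (a + (t : ZMod n)) ≠ 0 →
      (∀ j : ℕ, 0 < j → j < t → f (a + (j : ZMod n)) = 0) →
      f a = -f (a + (t : ZMod n))) :
    (Finset.univ.filter (fun a : ZMod n => f a = 1)).card =
      (Finset.univ.filter (fun a : ZMod n => f a = -1)).card :=
  alternation_equal_plus_minus_general n f halt
end

section
/- Let n be even, m = n/d with d even, and f : ZMod n → {-1,0,1}. Suppose the support of f is invariant under translation by m and the number of elements of the support within any m consecutive indices is odd, and the nonzero values of f alternate in sign around the cycle. Then f(a + m) = -f(a) for all a. -/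
/-!
Read along the cycle from a point `a` of the support, the nonzero labels alternate in sign, so
whenever `a + t` is in the support its label is `(-1) ^ (c + 1) * f a`, where `c` is the number of
nonzero labels in `[a, a + t]`. For `t = m` the endpoint `a + m` lies in the support as well, and
the window `[a, a + m)` holds an odd number of nonzero labels, so `c` is even and `f (a + m) = -f a`.
-/

open Finset

section Alternating

variable {S : Type*} [Ring S]

def AlternatesInSign (g : ℕ → S) : Prop :=
  ∀ i t, i < t → g i ≠ 0 → g t ≠ 0 → (∀ j, i < j → j < t → g j = 0) → g t = -g i

variable [DecidableEq S] {g : ℕ → S}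

theorem AlternatesInSign.exists_last_ne_zero (hg : AlternatesInSign g) (h0 : g 0 ≠ 0) (t : ℕ) :
    ∃ k ≤ t, g k ≠ 0 ∧ (∀ j, k < j → j ≤ t → g j = 0) ∧
      g k = (-1) ^ (#{j ∈ range (t + 1) | g j ≠ 0} + 1) * g 0 := by
  induction t with
  | zero =>
    refine ⟨0, le_rfl, h0, fun j hj hj' => by omega, ?_⟩
    rw [range_one, filter_singleton, if_pos h0]
    simp
  | succ t ih =>
    obtain ⟨k, hkt, hk, hgap, hsign⟩ := ih
    rw [range_add_one, filter_insert]
    by_cases hnext : g (t + 1) = 0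
    · refine ⟨k, by omega, hk, fun j hkj hjt => ?_, by simpa [hnext] using hsign⟩
      rcases Nat.lt_or_eq_of_le hjt with hjt | rfl
      exacts [hgap j hkj (by omega), hnext]
    · have hflip : g (t + 1) = -g k :=
        hg k (t + 1) (by omega) hk hnext fun j hkj hjt => hgap j hkj (by omega)
      refine ⟨t + 1, le_rfl, hnext, fun j hj hj' => by omega, ?_⟩
      rw [if_pos hnext, card_insert_of_notMem (by simp), hflip, hsign, pow_succ _ (_ + 1),
        mul_assoc, neg_one_mul, mul_neg]

theorem AlternatesInSign.eq_neg_of_odd_card (hg : AlternatesInSign g) (h0 : g 0 ≠ 0) {m : ℕ}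
    (hm : g m ≠ 0) (hodd : Odd #{j ∈ range m | g j ≠ 0}) : g m = -g 0 := by
  obtain ⟨k, hkm, -, hgap, hsign⟩ := hg.exists_last_ne_zero h0 m
  obtain rfl : k = m := by
    by_contra hne
    exact hm (hgap m (by omega) le_rfl)
  have hodd' : Odd (#{j ∈ range (k + 1) | g j ≠ 0} + 1) := by
    rw [range_add_one, filter_insert, if_pos hm, card_insert_of_notMem (by simp)]
    exact hodd.add_one.add_one
  rw [hsign, hodd'.neg_one_pow, neg_one_mul]

end Alternating

theorem alternatesInSign_comp_add_natCast {R S : Type*} [AddMonoidWithOne R] [Ring S]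
    {f : R → S}
    (halt : ∀ (a : R) (t : ℕ), 0 < t → f a ≠ 0 → f (a + (t : R)) ≠ 0 →
      (∀ j : ℕ, 0 < j → j < t → f (a + (j : R)) = 0) → f a = -f (a + (t : R)))
    (a : R) : AlternatesInSign fun j : ℕ => f (a + j) := by
  intro i t hit hi ht hgap
  obtain ⟨s, rfl⟩ := Nat.exists_eq_add_of_lt hit
  simp only at hi ht hgap ⊢
  have hshift : ∀ j : ℕ, a + ((i + j : ℕ) : R) = a + i + j := by simp [add_assoc]
  rw [show i + s + 1 = i + (s + 1) by omega, hshift] at ht ⊢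
  rw [halt (a + i) (s + 1) s.succ_pos hi ht fun j hj hjs => by
    simpa [add_assoc] using hgap (i + j) (by omega) (by omega), neg_neg]

theorem rotational_footprint_odd_count_implies_skewed_general (n : ℕ) (m : ℕ) (f : ZMod n → ℤ)
    (hsupp : ∀ a : ZMod n, f a ≠ 0 ↔ f (a + (m : ZMod n)) ≠ 0)
    (hodd : ∀ b : ZMod n,
      Odd (((Finset.range m).filter (fun i : ℕ => f (b + (i : ZMod n)) ≠ 0)).card))
    (halt : ∀ (a : ZMod n) (t : ℕ), 0 < t → f a ≠ 0 → f (a + (t : ZMod n)) ≠ 0 →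
      (∀ j : ℕ, 0 < j → j < t → f (a + (j : ZMod n)) = 0) →
      f a = -f (a + (t : ZMod n))) :
    ∀ a : ZMod n, f (a + (m : ZMod n)) = -f a := by
  intro a
  by_cases ha : f a = 0
  · rw [ha, neg_zero]
    exact not_not.mp fun ham => (hsupp a).mpr ham ha
  · simpa using (alternatesInSign_comp_add_natCast halt a).eq_neg_of_odd_card
      (by simpa using ha) ((hsupp a).mp ha) (hodd a)

theorem rotational_footprint_odd_count_implies_skewed (n : ℕ) (hn : Even n) (hpos : 0 < n)
    (d m : ℕ) (hd : Even d) (hm : m = n / d) (hdm : d * m = n) (f : ZMod n → ℤ)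
    (hvals : ∀ a : ZMod n, f a ∈ ({-1, 0, 1} : Set ℤ))
    (hsupp : ∀ a : ZMod n, f a ≠ 0 ↔ f (a + (m : ZMod n)) ≠ 0)
    (hodd : ∀ b : ZMod n,
      Odd (((Finset.range m).filter (fun i : ℕ => f (b + (i : ZMod n)) ≠ 0)).card))
    (halt : ∀ (a : ZMod n) (t : ℕ), 0 < t → f a ≠ 0 → f (a + (t : ZMod n)) ≠ 0 →
      (∀ j : ℕ, 0 < j → j < t → f (a + (j : ZMod n)) = 0) →
      f a = -f (a + (t : ZMod n))) :
    ∀ a : ZMod n, f (a + (m : ZMod n)) = -f a :=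
  rotational_footprint_odd_count_implies_skewed_general n m f hsupp hodd halt
end

section
/- For n = 4k+2, the number of mirror-symmetric footprints of an n-gon, counted up to the reflection exchanging the two halves, is 2^((n-4)/2) + 2^((n-6)/4); equivalently, (1/2)·(2^((n-2)/2) + 2^((n-2)/4)). -/
open Finset

theorem quot_card_aux {X : Type} [Fintype X] [DecidableEq X] (f : X → X)
    (hf : ∀ x, f (f x) = x) :
    2 * Nat.card (Quot fun S T : X => T = S ∨ T = f S)
      = Fintype.card X + Fintype.card {x : X // f x = x} := by
  have hequiv : Equivalence (fun S T : X => T = S ∨ T = f S) := by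
    constructor
    · intro x; exact Or.inl rfl
    · intro x y h; rcases h with h | h
      · exact Or.inl h.symm
      · exact Or.inr (by rw [h, hf])
    · intro x y z hxy hyz
      rcases hxy with h1 | h1 <;> rcases hyz with h2 | h2
      · exact Or.inl (h2.trans h1)
      · exact Or.inr (by rw [h2, h1])
      · exact Or.inr (by rw [h2, h1])
      · exact Or.inl (by rw [h2, h1, hf])
  let s : Setoid X := ⟨fun S T : X => T = S ∨ T = f S, hequiv⟩
  haveI : DecidableRel (fun a b : X => a ≈ b : X → X → Prop) :=
    fun a b => inferInstanceAs (Decidable (b = a ∨ b = f a))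
  have hcard : Nat.card (Quot fun S T : X => T = S ∨ T = f S) = Fintype.card (Quotient s) :=
    @Nat.card_eq_fintype_card (Quotient s) (Quotient.fintype s)
  rw [hcard]
  have hq : ∀ x y : X, (Quotient.mk s y = Quotient.mk s x) ↔ (y = x ∨ y = f x) := by
    intro x y
    rw [Quotient.eq]
    constructor
    · rintro (h | h)
      · exact Or.inl h.symm
      · exact Or.inr (by rw [h, hf])
    · rintro (h | h)
      · exact Or.inl h.symm
      · exact Or.inr (by rw [h, hf])
  have key : ∀ q : Quotient s,
      (univ.filter fun x : X => Quotient.mk s x = q).card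
        + (univ.filter fun x : X => f x = x ∧ Quotient.mk s x = q).card = 2 := by
    intro q
    induction q using Quotient.ind with
    | _ x =>
      have hfib : (univ.filter fun y : X => Quotient.mk s y = Quotient.mk s x) = {x, f x} := by
        ext y
        simp only [mem_filter, mem_univ, true_and, mem_insert, mem_singleton]
        exact hq x y
      by_cases hx : f x = x
      · have h1 : (univ.filter fun y : X => Quotient.mk s y = Quotient.mk s x) = {x} := by
          rw [hfib, hx]; simp
        have h2 : (univ.filter fun y : X => f y = y ∧ Quotient.mk s y = Quotient.mk s x) = {x} := by
          ext y
          simp only [mem_filter, mem_univ, true_and, mem_singleton, hq x y]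
          constructor
          · rintro ⟨_, (h | h)⟩
            · exact h
            · rw [h, hx]
          · rintro rfl; exact ⟨hx, Or.inl rfl⟩
        rw [h1, h2]; simp
      · have h1 : ((({x, f x}) : Finset X)).card = 2 := by
          rw [card_insert_of_notMem (by simp only [mem_singleton]; exact fun h => hx h.symm), card_singleton]
        have h2 : (univ.filter fun y : X => f y = y ∧ Quotient.mk s y = Quotient.mk s x) = ∅ := by
          ext y
          simp only [mem_filter, mem_univ, true_and, notMem_empty, iff_false, not_and, hq x y]
          rintro hy (rfl | rfl)
          · exact hx hy
          · exact hx (by rw [← hy, hf])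
        rw [hfib, h1, h2]; simp
  have hX : Fintype.card X = ∑ q : Quotient s, (univ.filter fun x : X => Quotient.mk s x = q).card := by
    rw [← card_univ]
    exact Finset.card_eq_sum_card_fiberwise (by simp)
  have hFix : Fintype.card {x : X // f x = x}
      = ∑ q : Quotient s, (univ.filter fun x : X => f x = x ∧ Quotient.mk s x = q).card := by
    rw [Fintype.card_subtype]
    rw [Finset.card_eq_sum_card_fiberwise (f := fun x : X => Quotient.mk s x) (t := univ) (by simp)]
    congr 1
    ext q
    rw [Finset.filter_filter]
  rw [hX, hFix, ← Finset.sum_add_distrib]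
  simp only [key]
  rw [Finset.sum_const, card_univ, smul_eq_mul, mul_comm]

namespace MFP
open Finset

variable (k : ℕ)

instance instNZ : NeZero (4*k+2) := ⟨by omega⟩

def mm : ZMod (4*k+2) := (((4*k+2)/2 : ℕ) : ZMod (4*k+2))

lemma mm_eq : mm k = ((2*k+1 : ℕ) : ZMod (4*k+2)) := by
  rw [mm, show (4*k+2)/2 = 2*k+1 from by omega]

lemma mm_add_mm : mm k + mm k = 0 := by
  rw [mm_eq, ← Nat.cast_add, show (2*k+1)+(2*k+1) = 4*k+2 by ring, ZMod.natCast_self]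

lemma neg_mm : -(mm k) = mm k := (eq_neg_of_add_eq_zero_left (mm_add_mm k)).symm

lemma neg_mm_sub (a : ZMod (4*k+2)) : -(mm k - a) = mm k - (-a) := by
  rw [neg_sub, sub_neg_eq_add, sub_eq_add_neg, neg_mm]; exact add_comm _ _

abbrev XX := {S : Finset (ZMod (4*k+2)) // (0 : ZMod (4*k+2)) ∈ S ∧ mm k ∈ S ∧ ∀ a ∈ S, -a ∈ S}

def gg (A : Finset (ZMod (4*k+2))) : Finset (ZMod (4*k+2)) := A.image fun a => mm k - a

lemma gg_gg (A : Finset (ZMod (4*k+2))) : gg k (gg k A) = A := by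
  rw [gg, gg, Finset.image_image]
  have h : ((fun a => mm k - a) ∘ fun a : ZMod (4*k+2) => mm k - a) = id := by
    funext a; simp
  rw [h, Finset.image_id]

def ff (S : XX k) : XX k :=
  ⟨gg k S.1, by
    obtain ⟨h0, hm, hs⟩ := S.2
    refine ⟨?_, ?_, ?_⟩
    · exact Finset.mem_image.2 ⟨mm k, hm, sub_self _⟩
    · exact Finset.mem_image.2 ⟨0, h0, by simp⟩
    · intro a ha
      obtain ⟨b, hb, rfl⟩ := Finset.mem_image.1 ha
      exact Finset.mem_image.2 ⟨-b, hs b hb, (neg_mm_sub k b).symm⟩⟩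

lemma ff_ff (S : XX k) : ff k (ff k S) = S := Subtype.ext (gg_gg k S.1)

lemma cast_inj' {a b : ℕ} (ha : a < 4*k+2) (hb : b < 4*k+2)
    (h : ((a : ℕ) : ZMod (4*k+2)) = ((b : ℕ) : ZMod (4*k+2))) : a = b := by
  have h2 := congrArg ZMod.val h
  rwa [ZMod.val_natCast_of_lt ha, ZMod.val_natCast_of_lt hb] at h2

def toF (S : XX k) : Finset (Fin (2*k)) :=
  univ.filter fun i => (((i : ℕ)+1 : ℕ) : ZMod (4*k+2)) ∈ S.1

lemma mem_toF {S : XX k} {i : Fin (2*k)} :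
    i ∈ toF k S ↔ (((i : ℕ)+1 : ℕ) : ZMod (4*k+2)) ∈ S.1 := by
  simp [toF]

def ofFset (A : Finset (Fin (2*k))) : Finset (ZMod (4*k+2)) :=
  insert 0 (insert (mm k)
    ((A.image fun i : Fin (2*k) => (((i : ℕ)+1 : ℕ) : ZMod (4*k+2)))
      ∪ (A.image fun i : Fin (2*k) => -(((i : ℕ)+1 : ℕ) : ZMod (4*k+2)))))

lemma mem_ofFset {A : Finset (Fin (2*k))} {a : ZMod (4*k+2)} :
    a ∈ ofFset k A ↔ a = 0 ∨ a = mm k ∨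
      (∃ i ∈ A, (((i : ℕ)+1 : ℕ) : ZMod (4*k+2)) = a) ∨
      (∃ i ∈ A, -(((i : ℕ)+1 : ℕ) : ZMod (4*k+2)) = a) := by
  simp only [ofFset, Finset.mem_insert, Finset.mem_union, Finset.mem_image]

def ofF (A : Finset (Fin (2*k))) : XX k :=
  ⟨ofFset k A, by
    refine ⟨(mem_ofFset k).2 (Or.inl rfl), (mem_ofFset k).2 (Or.inr (Or.inl rfl)), ?_⟩
    intro a ha
    rcases (mem_ofFset k).1 ha with rfl | rfl | ⟨i, hi, rfl⟩ | ⟨i, hi, rfl⟩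
    · exact (mem_ofFset k).2 (Or.inl (by simp))
    · exact (mem_ofFset k).2 (Or.inr (Or.inl (neg_mm k)))
    · exact (mem_ofFset k).2 (Or.inr (Or.inr (Or.inr ⟨i, hi, rfl⟩)))
    · exact (mem_ofFset k).2 (Or.inr (Or.inr (Or.inl ⟨i, hi, (neg_neg _).symm⟩)))⟩

lemma toF_ofF (A : Finset (Fin (2*k))) : toF k (ofF k A) = A := by
  ext i
  have hi2 := i.2
  have hi1 : ((i : ℕ)+1) < 4*k+2 := by omega
  rw [mem_toF]
  show (((i : ℕ)+1 : ℕ) : ZMod (4*k+2)) ∈ ofFset k A ↔ i ∈ A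
  rw [mem_ofFset]
  constructor
  · rintro (h | h | ⟨j, hj, hji⟩ | ⟨j, hj, hji⟩)
    · have h0 : ((i : ℕ)+1) = 0 := cast_inj' k (b := 0) hi1 (by omega) (by rw [h, Nat.cast_zero])
      omega
    · rw [mm_eq] at h
      exact absurd (cast_inj' k hi1 (by omega) h) (by omega)
    · have hj2 := j.2
      have := cast_inj' k (by omega) hi1 hji
      have hji' : j = i := Fin.ext (by omega)
      rwa [← hji']
    · exfalso
      have hj2 := j.2
      have hsum : ((((i : ℕ)+1) + ((j : ℕ)+1) : ℕ) : ZMod (4*k+2)) = ((0 : ℕ) : ZMod (4*k+2)) := by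
        rw [Nat.cast_add, Nat.cast_zero, ← hji, neg_add_cancel]
      have := cast_inj' k (by omega) (by omega) hsum
      omega
  · intro h
    exact Or.inr (Or.inr (Or.inl ⟨i, h, rfl⟩))

lemma ofF_toF (S : XX k) : ofF k (toF k S) = S := by
  apply Subtype.ext
  obtain ⟨h0, hm, hs⟩ := S.2
  ext a
  show a ∈ ofFset k (toF k S) ↔ a ∈ S.1
  rw [mem_ofFset]
  constructor
  · rintro (rfl | rfl | ⟨i, hi, rfl⟩ | ⟨i, hi, rfl⟩)
    · exact h0
    · exact hm
    · exact (mem_toF k).1 hi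
    · exact hs _ ((mem_toF k).1 hi)
  · intro ha
    have hv : a.val < 4*k+2 := ZMod.val_lt a
    have hcast : ((a.val : ℕ) : ZMod (4*k+2)) = a := ZMod.natCast_rightInverse a
    by_cases hz : a.val = 0
    · left
      rw [← hcast, hz, Nat.cast_zero]
    by_cases hM : a.val = 2*k+1
    · right; left
      rw [← hcast, hM]
      exact (mm_eq k).symm
    by_cases hsmall : a.val ≤ 2*k
    · refine Or.inr (Or.inr (Or.inl ⟨⟨a.val - 1, by omega⟩, ?_, ?_⟩))
      · rw [mem_toF]
        simpa [show (a.val - 1) + 1 = a.val by omega, hcast] using ha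
      · simp only
        rw [show (a.val - 1) + 1 = a.val by omega, hcast]
    · -- a.val ≥ 2k+2
      have hna : -a ∈ S.1 := hs a ha
      have hanz : a ≠ 0 := by
        intro h; rw [h] at hz; simp [ZMod.val_zero] at hz
      have hnv : (-a).val = 4*k+2 - a.val := by
        rw [ZMod.neg_val, if_neg hanz]
      refine Or.inr (Or.inr (Or.inr ⟨⟨4*k+2 - a.val - 1, by omega⟩, ?_, ?_⟩))
      · rw [mem_toF]
        have he : ((4*k+2 - a.val - 1) + 1) = (-a).val := by omega
        simp only [he]
        rw [ZMod.natCast_rightInverse (-a)]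
        exact hna
      · simp only
        have he : ((4*k+2 - a.val - 1) + 1) = (-a).val := by omega
        rw [he, ZMod.natCast_rightInverse (-a), neg_neg]

lemma toF_ff (S : XX k) : toF k (ff k S) = (toF k S).image Fin.rev := by
  have key : ∀ i : Fin (2*k),
      mm k - (((i : ℕ)+1 : ℕ) : ZMod (4*k+2)) = ((2*k - (i : ℕ) : ℕ) : ZMod (4*k+2)) := by
    intro i
    have hi2 := i.2
    rw [mm_eq, ← Nat.cast_sub (by omega)]
    congr 1
    omega
  have hrev1 : ∀ i : Fin (2*k), ((Fin.rev i : Fin (2*k)) : ℕ) + 1 = 2*k - (i : ℕ) := by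
    intro i
    have hi2 := i.2
    rw [Fin.val_rev]; omega
  ext i
  constructor
  · intro h
    rw [mem_toF] at h
    rw [Finset.mem_image]
    refine ⟨Fin.rev i, ?_, Fin.rev_rev i⟩
    rw [mem_toF, hrev1]
    obtain ⟨b, hb, hbe⟩ := Finset.mem_image.1 h
    have hb2 : b = mm k - (((i : ℕ)+1 : ℕ) : ZMod (4*k+2)) := by
      rw [← hbe, sub_sub_cancel]
    rw [hb2, key] at hb
    exact hb
  · intro h
    rw [Finset.mem_image] at h
    obtain ⟨j, hj, rfl⟩ := h
    rw [mem_toF] at hj ⊢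
    rw [hrev1]
    exact Finset.mem_image.2 ⟨(((j : ℕ)+1 : ℕ) : ZMod (4*k+2)), hj, key j⟩

def eEquiv : XX k ≃ Finset (Fin (2*k)) := ⟨toF k, ofF k, ofF_toF k, toF_ofF k⟩

def emb (j : Fin k) : Fin (2*k) := ⟨(j : ℕ), by have := j.2; omega⟩

lemma emb_inj : Function.Injective (emb k) := by
  intro a b h
  have h2 : ((emb k a : Fin (2*k)) : ℕ) = ((emb k b : Fin (2*k)) : ℕ) := congrArg Fin.val h
  exact Fin.ext h2

lemma rev_emb_val (j : Fin k) : ((Fin.rev (emb k j) : Fin (2*k)) : ℕ) = 2*k - ((j : ℕ)+1) := by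
  rw [Fin.val_rev]; rfl

def fixF (A : {A : Finset (Fin (2*k)) // A.image Fin.rev = A}) : Finset (Fin k) :=
  univ.filter fun j => emb k j ∈ A.1

lemma mem_rev_iff (A : {A : Finset (Fin (2*k)) // A.image Fin.rev = A}) (x : Fin (2*k)) :
    Fin.rev x ∈ A.1 ↔ x ∈ A.1 := by
  constructor
  · intro h
    rw [← A.2]
    exact Finset.mem_image.2 ⟨Fin.rev x, h, Fin.rev_rev x⟩
  · intro h
    rw [← A.2] at h
    obtain ⟨y, hy, hyx⟩ := Finset.mem_image.1 h
    have : y = Fin.rev x := by rw [← hyx, Fin.rev_rev]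
    rwa [this] at hy

def fixG (B : Finset (Fin k)) : {A : Finset (Fin (2*k)) // A.image Fin.rev = A} :=
  ⟨B.image (emb k) ∪ B.image (fun j => Fin.rev (emb k j)), by
    rw [Finset.image_union, Finset.image_image, Finset.image_image]
    have h1 : (Fin.rev ∘ fun j => Fin.rev (emb k j)) = emb k := by
      funext j; simp [Function.comp, Fin.rev_rev]
    have h2 : (Fin.rev ∘ emb k) = fun j => Fin.rev (emb k j) := rfl
    rw [h1, h2, Finset.union_comm]⟩

lemma fixF_fixG (B : Finset (Fin k)) : fixF k (fixG k B) = B := by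
  ext j
  have hj2 := j.2
  simp only [fixF, Finset.mem_filter, Finset.mem_univ, true_and, fixG,
    Finset.mem_union, Finset.mem_image]
  constructor
  · rintro (⟨j', hj', hje⟩ | ⟨j', hj', hje⟩)
    · rwa [← emb_inj k hje]
    · exfalso
      have hv := congrArg Fin.val hje
      rw [rev_emb_val] at hv
      have hj'2 := j'.2
      have : (emb k j : ℕ) = (j : ℕ) := rfl
      omega
  · intro h
    exact Or.inl ⟨j, h, rfl⟩

lemma fixG_fixF (A : {A : Finset (Fin (2*k)) // A.image Fin.rev = A}) :
    fixG k (fixF k A) = A := by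
  apply Subtype.ext
  ext i
  have hi2 := i.2
  simp only [fixG, fixF, Finset.mem_union, Finset.mem_image, Finset.mem_filter,
    Finset.mem_univ, true_and]
  constructor
  · rintro (⟨j, hj, rfl⟩ | ⟨j, hj, rfl⟩)
    · exact hj
    · exact (mem_rev_iff k A _).2 hj
  · intro h
    by_cases hik : (i : ℕ) < k
    · refine Or.inl ⟨⟨(i : ℕ), hik⟩, ?_, ?_⟩
      · have : emb k ⟨(i : ℕ), hik⟩ = i := Fin.ext rfl
        rwa [this]
      · exact Fin.ext rfl
    · have hrv : ((Fin.rev i : Fin (2*k)) : ℕ) < k := by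
        rw [Fin.val_rev]; omega
      refine Or.inr ⟨⟨((Fin.rev i : Fin (2*k)) : ℕ), hrv⟩, ?_, ?_⟩
      · have he : emb k ⟨((Fin.rev i : Fin (2*k)) : ℕ), hrv⟩ = Fin.rev i := Fin.ext rfl
        rw [he]
        exact (mem_rev_iff k A i).2 h
      · have he : emb k ⟨((Fin.rev i : Fin (2*k)) : ℕ), hrv⟩ = Fin.rev i := Fin.ext rfl
        rw [he, Fin.rev_rev]

def fixEquiv : {A : Finset (Fin (2*k)) // A.image Fin.rev = A} ≃ Finset (Fin k) :=
  ⟨fixF k, fixG k, fixG_fixF k, fixF_fixG k⟩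

lemma ff_fixed_iff (S : XX k) : ff k S = S ↔ (toF k S).image Fin.rev = toF k S := by
  constructor
  · intro h
    rw [← toF_ff, h]
  · intro h
    apply (eEquiv k).injective
    show toF k (ff k S) = toF k S
    rw [toF_ff, h]

def fixEquiv2 : {S : XX k // ff k S = S} ≃ Finset (Fin k) :=
  ((Equiv.subtypeEquiv (eEquiv k) (fun S => by
      rw [ff_fixed_iff]
      exact Iff.rfl)).trans (fixEquiv k))

lemma card_XX : Fintype.card (XX k) = 2^(2*k) := by
  rw [Fintype.card_congr (eEquiv k), Fintype.card_finset, Fintype.card_fin]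

lemma card_fix : Fintype.card {S : XX k // ff k S = S} = 2^k := by
  rw [Fintype.card_congr (fixEquiv2 k), Fintype.card_finset, Fintype.card_fin]

end MFP

theorem count_mirror_footprints_4k2 (k : ℕ) (hk : 0 < k) :
    Nat.card (Quot (fun S T : {S : Finset (ZMod (4 * k + 2)) //
          (0 : ZMod (4 * k + 2)) ∈ S ∧
          (((4 * k + 2) / 2 : ℕ) : ZMod (4 * k + 2)) ∈ S ∧
          ∀ a ∈ S, -a ∈ S} =>
        T.1 = S.1 ∨
        T.1 = S.1.image (fun a => (((4 * k + 2) / 2 : ℕ) : ZMod (4 * k + 2)) - a))) =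
      2 ^ ((4 * k + 2 - 4) / 2) + 2 ^ ((4 * k + 2 - 6) / 4) := by
  simp only [show (4 * k + 2 - 4) / 2 = 2 * k - 1 from by omega,
    show (4 * k + 2 - 6) / 4 = k - 1 from by omega]
  have h := quot_card_aux (MFP.ff k) (MFP.ff_ff k)
  rw [MFP.card_XX, MFP.card_fix] at h
  have e1 : (2:ℕ) ^ (2 * k) = 2 * 2 ^ (2 * k - 1) := by
    rw [← pow_succ']; congr 1; omega
  have e2 : (2:ℕ) ^ k = 2 * 2 ^ (k - 1) := by
    rw [← pow_succ']; congr 1; omega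
  rw [e1, e2] at h
  have hQ : Nat.card (Quot fun S T : MFP.XX k => T = S ∨ T = MFP.ff k S)
      = 2 ^ (2 * k - 1) + 2 ^ (k - 1) := by
    refine Nat.eq_of_mul_eq_mul_left (by norm_num) (h.trans ?_)
    rw [mul_add]
  have hrel : (fun S T : MFP.XX k => T.1 = S.1 ∨ T.1 = MFP.gg k S.1)
      = (fun S T : MFP.XX k => T = S ∨ T = MFP.ff k S) := by
    funext S T
    apply propext
    constructor
    · rintro (h | h)
      · exact Or.inl (Subtype.ext h)
      · exact Or.inr (Subtype.ext h)
    · rintro (rfl | rfl)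
      · exact Or.inl rfl
      · exact Or.inr rfl
  have final : Nat.card (Quot fun S T : MFP.XX k => T.1 = S.1 ∨ T.1 = MFP.gg k S.1)
      = 2 ^ (2 * k - 1) + 2 ^ (k - 1) := by
    rw [hrel]; exact hQ
  exact final
end

section
/- For n = 4k, the number of mirror-symmetric footprints of an n-gon, counted up to the reflection exchanging the two halves, is 2^((n-4)/2) + 2^((n-4)/4); equivalently, (1/2)·(2^((n-2)/2) + 2^(n/4)). -/
theorem card_quot_involutive {α : Type*} [Fintype α] [DecidableEq α]
    (f : α → α) (hf : Function.Involutive f) :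
    2 * Nat.card (Quot fun a b => b = a ∨ b = f a) =
      Nat.card α + Nat.card {a // f a = a} := by
  classical
  let s : Setoid α := ⟨fun a b => b = a ∨ b = f a,
    ⟨fun a => Or.inl rfl,
     fun {a b} h => by
       rcases h with h | h
       · exact Or.inl h.symm
       · exact Or.inr (by rw [h, hf])
     ,
     fun {a b c} hab hbc => by
       rcases hab with hab | hab <;> rcases hbc with hbc | hbc
       · exact Or.inl (hbc.trans hab)
       · exact Or.inr (hbc.trans (by rw [hab]))
       · rw [hbc, hab]; exact Or.inr rfl
       · rw [hbc, hab, hf]; exact Or.inl rfl⟩⟩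
  haveI : DecidableRel (fun a b : α => a ≈ b) := fun a b =>
    inferInstanceAs (Decidable (b = a ∨ b = f a))
  have hquot : (Quot fun a b => b = a ∨ b = f a) = Quotient s := rfl
  rw [hquot]
  rw [Nat.card_eq_fintype_card, Nat.card_eq_fintype_card, Nat.card_eq_fintype_card]
  have h1 : Fintype.card α =
      ∑ q : Quotient s, (Finset.univ.filter fun a => Quotient.mk s a = q).card := by
    rw [← Finset.card_univ (α := α)]
    exact Finset.card_eq_sum_card_fiberwise (fun x _ => Finset.mem_univ _)
  have h2 : Fintype.card {a // f a = a} =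
      ∑ q : Quotient s,
        ((Finset.univ.filter fun a => f a = a).filter fun a => Quotient.mk s a = q).card := by
    rw [Fintype.card_subtype]
    exact Finset.card_eq_sum_card_fiberwise (fun x _ => Finset.mem_univ _)
  have key : ∀ q : Quotient s,
      (Finset.univ.filter fun a => Quotient.mk s a = q).card +
      ((Finset.univ.filter fun a => f a = a).filter fun a => Quotient.mk s a = q).card = 2 := by
    intro q
    induction q using Quotient.ind with
    | _ a =>
    have hmem : ∀ b : α, (Quotient.mk s b = Quotient.mk s a) ↔ (b = a ∨ b = f a) := by
      intro b
      rw [Quotient.eq]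
      constructor
      · rintro (h | h)
        · exact Or.inl h.symm
        · exact Or.inr (by rw [h, hf])
      · rintro (h | h)
        · exact Or.inl h.symm
        · exact Or.inr (by rw [h, hf])
    by_cases hfa : f a = a
    · have e1 : (Finset.univ.filter fun b => Quotient.mk s b = Quotient.mk s a) = {a} := by
        ext b
        simp only [Finset.mem_filter, Finset.mem_univ, true_and, hmem b, hfa, or_self,
          Finset.mem_singleton]
      have e2 : ((Finset.univ.filter fun b => f b = b).filter
          fun b => Quotient.mk s b = Quotient.mk s a) = {a} := by
        ext b
        simp only [Finset.mem_filter, Finset.mem_univ, true_and, hmem b, hfa, or_self,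
          Finset.mem_singleton]
        constructor
        · rintro ⟨_, h⟩; exact h
        · rintro rfl; exact ⟨hfa, rfl⟩
      rw [e1, e2]; simp
    · have e1 : (Finset.univ.filter fun b => Quotient.mk s b = Quotient.mk s a) = {a, f a} := by
        ext b
        simp only [Finset.mem_filter, Finset.mem_univ, true_and, hmem b, Finset.mem_insert,
          Finset.mem_singleton]
      have e2 : ((Finset.univ.filter fun b => f b = b).filter
          fun b => Quotient.mk s b = Quotient.mk s a) = ∅ := by
        ext b
        simp only [Finset.mem_filter, Finset.mem_univ, true_and, hmem b, Finset.notMem_empty,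
          iff_false, not_and]
        rintro hb (rfl | rfl)
        · exact hfa hb
        · exact hfa (by rw [← hf a]; exact congrArg f hb)
      rw [e1, e2, Finset.card_pair (fun h => hfa h.symm)]
      simp
  rw [h1, h2, ← Finset.sum_add_distrib]
  rw [Finset.sum_congr rfl (fun q _ => key q)]
  simp [Finset.card_univ, mul_comm]

section Aux
variable (k : ℕ)

def MirP (S : Finset (ZMod (4 * k))) : Prop :=
  (0 : ZMod (4 * k)) ∈ S ∧ (((2 * k : ℕ)) : ZMod (4 * k)) ∈ S ∧ ∀ a ∈ S, -a ∈ S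

instance (k : ℕ) : DecidablePred (MirP k) := fun S =>
  inferInstanceAs (Decidable (_ ∧ _ ∧ _))

variable {k}

lemma cast_inj_lt {u v : ℕ} (hk : 0 < k) (hu : u < 4 * k) (hv : v < 4 * k)
    (h : (u : ZMod (4 * k)) = (v : ZMod (4 * k))) : u = v := by
  haveI : NeZero (4 * k) := ⟨by omega⟩
  have := congrArg ZMod.val h
  rwa [ZMod.val_cast_of_lt hu, ZMod.val_cast_of_lt hv] at this

lemma neg_cast_eq {u : ℕ} (hk : 0 < k) (hu : u ≤ 4 * k) :
    -((u : ℕ) : ZMod (4 * k)) = ((4 * k - u : ℕ) : ZMod (4 * k)) := by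
  haveI : NeZero (4 * k) := ⟨by omega⟩
  rw [neg_eq_iff_add_eq_zero, ← Nat.cast_add, show u + (4 * k - u) = 4 * k by omega,
    ZMod.natCast_self]

lemma neg_c (hk : 0 < k) :
    -(((2 * k : ℕ)) : ZMod (4 * k)) = (((2 * k : ℕ)) : ZMod (4 * k)) := by
  rw [neg_cast_eq hk (by omega)]
  congr 1
  omega
end Aux

section Aux2
variable {k : ℕ}

lemma mem_char (hk : 0 < k) {S : Finset (ZMod (4 * k))} (hS : MirP k S) (a : ZMod (4 * k)) :
    a ∈ S ↔ (a = 0 ∨ a = (((2 * k : ℕ)) : ZMod (4 * k)) ∨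
      ∃ i : Fin (2 * k - 1), ((((i : ℕ) + 1 : ℕ)) : ZMod (4 * k)) ∈ S ∧
        (a = ((((i : ℕ) + 1 : ℕ)) : ZMod (4 * k)) ∨
         a = -((((i : ℕ) + 1 : ℕ)) : ZMod (4 * k)))) := by
  haveI : NeZero (4 * k) := ⟨by omega⟩
  obtain ⟨h0, h2k, hneg⟩ := hS
  constructor
  · intro ha
    have hval : ((a.val : ℕ) : ZMod (4 * k)) = a := ZMod.natCast_rightInverse a
    have hlt : a.val < 4 * k := ZMod.val_lt a
    rcases Nat.lt_or_ge a.val 1 with h | h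
    · left
      rw [← hval, show a.val = 0 by omega, Nat.cast_zero]
    rcases Nat.lt_trichotomy a.val (2 * k) with h' | h' | h'
    · right; right
      refine ⟨⟨a.val - 1, by omega⟩, ?_, Or.inl ?_⟩
      · rw [show a.val - 1 + 1 = a.val by omega, hval]; exact ha
      · rw [show a.val - 1 + 1 = a.val by omega, hval]
    · right; left
      rw [← hval, h']
    · right; right
      refine ⟨⟨4 * k - a.val - 1, by omega⟩, ?_, Or.inr ?_⟩
      · rw [show 4 * k - a.val - 1 + 1 = 4 * k - a.val by omega, ← neg_cast_eq hk (by omega), hval]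
        exact hneg a ha
      · rw [show 4 * k - a.val - 1 + 1 = 4 * k - a.val by omega, ← neg_cast_eq hk (by omega),
          hval, neg_neg]
  · rintro (rfl | rfl | ⟨i, hi, (rfl | rfl)⟩)
    · exact h0
    · exact h2k
    · exact hi
    · exact hneg _ hi

/-- the encoding equivalence -/
noncomputable def mirEquiv (hk : 0 < k) :
    {S : Finset (ZMod (4 * k)) // MirP k S} ≃ (Fin (2 * k - 1) → Bool) := by
  haveI : NeZero (4 * k) := ⟨by omega⟩
  exact {
    toFun := fun S i => decide (((((i : ℕ) + 1 : ℕ)) : ZMod (4 * k)) ∈ S.1)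
    invFun := fun g => ⟨Finset.univ.filter (fun a : ZMod (4 * k) =>
        a = 0 ∨ a = (((2 * k : ℕ)) : ZMod (4 * k)) ∨
        ∃ i : Fin (2 * k - 1), g i = true ∧
          (a = ((((i : ℕ) + 1 : ℕ)) : ZMod (4 * k)) ∨
           a = -((((i : ℕ) + 1 : ℕ)) : ZMod (4 * k)))), by
      refine ⟨?_, ?_, ?_⟩
      · simp
      · simp
      · intro a ha
        simp only [Finset.mem_filter, Finset.mem_univ, true_and] at ha ⊢
        rcases ha with rfl | rfl | ⟨i, hi, (rfl | rfl)⟩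
        · left; rw [neg_zero]
        · right; left; exact neg_c hk
        · exact Or.inr (Or.inr ⟨i, hi, Or.inr rfl⟩)
        · exact Or.inr (Or.inr ⟨i, hi, Or.inl (neg_neg _)⟩)⟩
    left_inv := by
      intro S
      apply Subtype.ext
      ext a
      simp only [Finset.mem_filter, Finset.mem_univ, true_and, decide_eq_true_eq]
      exact (mem_char hk S.2 a).symm
    right_inv := by
      intro g
      funext i
      simp only [Finset.mem_filter, Finset.mem_univ, true_and]
      have hne0 : ((((i : ℕ) + 1 : ℕ)) : ZMod (4 * k)) ≠ 0 := by
        intro h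
        have := cast_inj_lt hk (u := (i : ℕ) + 1) (v := 0) (by have := i.2; omega) (by omega)
          (by rw [h, Nat.cast_zero])
        omega
      have hne2k : ((((i : ℕ) + 1 : ℕ)) : ZMod (4 * k)) ≠ (((2 * k : ℕ)) : ZMod (4 * k)) := by
        intro h
        have := cast_inj_lt hk (u := (i : ℕ) + 1) (v := 2 * k) (by have := i.2; omega) (by omega) h
        have := i.2
        omega
      rcases h : g i with _ | _
      · simp only [hne0, hne2k, false_or, decide_eq_false_iff_not]
        rintro ⟨j, hj, (hij | hij)⟩
        · have := cast_inj_lt hk (u := (i : ℕ) + 1) (v := (j : ℕ) + 1)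
            (by have := i.2; omega) (by have := j.2; omega) hij
          have : i = j := Fin.ext (by omega)
          rw [this, hj] at h; exact Bool.noConfusion h
        · rw [neg_cast_eq hk (by have := j.2 ; omega)] at hij
          have := cast_inj_lt hk (u := (i : ℕ) + 1) (v := 4 * k - ((j : ℕ) + 1))
            (by have := i.2; omega) (by omega) hij
          have := i.2; have := j.2
          omega
      · simp only [decide_eq_true_eq]
        exact Or.inr (Or.inr ⟨i, h, Or.inl rfl⟩)
  }

end Aux2

section Aux3
variable {k : ℕ}

def mirFlip (hk : 0 < k) (S : {S : Finset (ZMod (4 * k)) // MirP k S}) :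
    {S : Finset (ZMod (4 * k)) // MirP k S} :=
  ⟨S.1.image (fun a => (((2 * k : ℕ)) : ZMod (4 * k)) - a), by
    obtain ⟨h0, h2k, hneg⟩ := S.2
    refine ⟨?_, ?_, ?_⟩
    · exact Finset.mem_image.2 ⟨_, h2k, sub_self _⟩
    · exact Finset.mem_image.2 ⟨_, h0, sub_zero _⟩
    · intro b hb
      obtain ⟨a, ha, rfl⟩ := Finset.mem_image.1 hb
      refine Finset.mem_image.2 ⟨-a, hneg a ha, ?_⟩
      rw [sub_neg_eq_add, neg_sub]
      rw [sub_eq_add_neg, neg_c hk, add_comm]⟩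

lemma mirFlip_inv (hk : 0 < k) : Function.Involutive (mirFlip hk) := by
  intro S
  apply Subtype.ext
  show (S.1.image _).image _ = S.1
  rw [Finset.image_image]
  have : ((fun a => (((2 * k : ℕ)) : ZMod (4 * k)) - a) ∘
      fun a => (((2 * k : ℕ)) : ZMod (4 * k)) - a) = id := by
    funext a; simp [sub_sub_cancel]
  rw [this, Finset.image_id]

def mirSigma (i : Fin (2 * k - 1)) : Fin (2 * k - 1) :=
  ⟨2 * k - 2 - (i : ℕ), by have := i.2; omega⟩

lemma mirEquiv_flip (hk : 0 < k) (S : {S : Finset (ZMod (4 * k)) // MirP k S}) :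
    mirEquiv hk (mirFlip hk S) = fun i => mirEquiv hk S (mirSigma i) := by
  haveI : NeZero (4 * k) := ⟨by omega⟩
  funext i
  show decide _ = decide _
  rw [decide_eq_decide]
  have hi2 := i.2
  have hcast : (((2 * k : ℕ)) : ZMod (4 * k)) - ((((i : ℕ) + 1 : ℕ)) : ZMod (4 * k)) =
      (((((mirSigma i : Fin (2 * k - 1)) : ℕ) + 1 : ℕ)) : ZMod (4 * k)) := by
    rw [← Nat.cast_sub (by omega)]
    congr 1
    show 2 * k - ((i : ℕ) + 1) = 2 * k - 2 - (i : ℕ) + 1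
    omega
  constructor
  · intro h
    obtain ⟨a, ha, haa⟩ := Finset.mem_image.1 h
    have : a = (((2 * k : ℕ)) : ZMod (4 * k)) - ((((i : ℕ) + 1 : ℕ)) : ZMod (4 * k)) := by
      rw [← haa]; ring
    rw [this, hcast] at ha
    exact ha
  · intro h
    refine Finset.mem_image.2 ⟨_, h, ?_⟩
    rw [← hcast]
    ring

def mirFixEquiv (hk : 0 < k) :
    {g : Fin (2 * k - 1) → Bool // (fun i => g (mirSigma i)) = g} ≃ (Fin k → Bool) where
  toFun g := fun j => g.1 ⟨(j : ℕ), by have := j.2; omega⟩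
  invFun h := ⟨fun i => h ⟨min (i : ℕ) (2 * k - 2 - (i : ℕ)), by have := i.2; omega⟩, by
    funext i
    have hi2 := i.2
    exact congrArg h (Fin.ext (by
      show min (2 * k - 2 - (i : ℕ)) (2 * k - 2 - (2 * k - 2 - (i : ℕ))) =
        min (i : ℕ) (2 * k - 2 - (i : ℕ))
      omega))⟩
  left_inv := by
    rintro ⟨g, hg⟩
    apply Subtype.ext
    funext i
    have hi2 := i.2
    rcases le_or_gt (i : ℕ) (2 * k - 2 - (i : ℕ)) with h | h
    · exact congrArg g (Fin.ext (by
        show min (i : ℕ) (2 * k - 2 - (i : ℕ)) = (i : ℕ)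
        omega))
    · have he : (⟨min (i : ℕ) (2 * k - 2 - (i : ℕ)), by omega⟩ : Fin (2 * k - 1)) =
          mirSigma i := Fin.ext (by
        show min (i : ℕ) (2 * k - 2 - (i : ℕ)) = 2 * k - 2 - (i : ℕ)
        omega)
      show g ⟨min (i : ℕ) (2 * k - 2 - (i : ℕ)), by omega⟩ = g i
      rw [he]
      exact congrFun hg i
  right_inv := by
    intro h
    funext j
    have hj2 := j.2
    exact congrArg h (Fin.ext (by
      show min ((j : ℕ)) (2 * k - 2 - (j : ℕ)) = (j : ℕ)
      omega))

end Aux3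

section Main
variable {k : ℕ}

lemma cardA (hk : 0 < k) :
    Nat.card {S : Finset (ZMod (4 * k)) // MirP k S} = 2 ^ (2 * k - 1) := by
  rw [Nat.card_congr (mirEquiv hk), Nat.card_eq_fintype_card]
  simp [Fintype.card_fun]

lemma cardFix (hk : 0 < k) :
    Nat.card {S : {S : Finset (ZMod (4 * k)) // MirP k S} // mirFlip hk S = S} = 2 ^ k := by
  have e : {S : {S : Finset (ZMod (4 * k)) // MirP k S} // mirFlip hk S = S} ≃
      {g : Fin (2 * k - 1) → Bool // (fun i => g (mirSigma i)) = g} :=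
    Equiv.subtypeEquiv (mirEquiv hk) (fun S => by
      constructor
      · intro h
        have h2 := congrArg (mirEquiv hk) h
        rwa [mirEquiv_flip hk S] at h2
      · intro h
        apply (mirEquiv hk).injective
        rw [mirEquiv_flip hk S]
        exact h)
  rw [Nat.card_congr (e.trans (mirFixEquiv hk)), Nat.card_eq_fintype_card]
  simp [Fintype.card_fun]

end Main

theorem count_mirror_footprints_4k (k : ℕ) (hk : 0 < k) :
    Nat.card (Quot (fun S T : {S : Finset (ZMod (4 * k)) //
          (0 : ZMod (4 * k)) ∈ S ∧
          (((4 * k) / 2 : ℕ) : ZMod (4 * k)) ∈ S ∧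
          ∀ a ∈ S, -a ∈ S} =>
        T.1 = S.1 ∨
        T.1 = S.1.image (fun a => (((4 * k) / 2 : ℕ) : ZMod (4 * k)) - a))) =
      2 ^ ((4 * k - 4) / 2) + 2 ^ ((4 * k - 4) / 4) := by
  haveI : NeZero (4 * k) := ⟨by omega⟩
  have hdiv : (4 * k) / 2 = 2 * k := by omega
  have EQ := Quot.congr
      ((Equiv.subtypeEquiv (Equiv.refl (Finset (ZMod (4 * k)))) (fun S => by
        rw [hdiv]; exact Iff.rfl)) :
      {S : Finset (ZMod (4 * k)) //
        (0 : ZMod (4 * k)) ∈ S ∧ (((4 * k) / 2 : ℕ) : ZMod (4 * k)) ∈ S ∧ ∀ a ∈ S, -a ∈ S} ≃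
      {S : Finset (ZMod (4 * k)) // MirP k S})
      (ra := fun S T => T.1 = S.1 ∨
        T.1 = S.1.image (fun a => (((4 * k) / 2 : ℕ) : ZMod (4 * k)) - a))
      (rb := fun S T : {S : Finset (ZMod (4 * k)) // MirP k S} => T.1 = S.1 ∨
        T.1 = S.1.image (fun a => (((2 * k : ℕ)) : ZMod (4 * k)) - a))
      (fun S T => by simp only [hdiv]; exact ⟨fun h => h, fun h => h⟩)
  rw [Nat.card_congr EQ]
  have hrel : (fun S T : {S : Finset (ZMod (4 * k)) // MirP k S} =>
        T.1 = S.1 ∨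
        T.1 = S.1.image (fun a => (((2 * k : ℕ)) : ZMod (4 * k)) - a)) =
      (fun S T => T = S ∨ T = mirFlip hk S) := by
    funext S T
    apply propext
    constructor
    · rintro (h | h)
      · exact Or.inl (Subtype.ext h)
      · exact Or.inr (Subtype.ext h)
    · rintro (h | h)
      · exact Or.inl (congrArg Subtype.val h)
      · exact Or.inr (congrArg Subtype.val h)
  rw [hrel]
  have h2 := card_quot_involutive (mirFlip hk) (mirFlip_inv hk)
  rw [cardA hk, cardFix hk] at h2
  rw [show (4 * k - 4) / 2 = 2 * k - 2 from by omega,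
    show (4 * k - 4) / 4 = k - 1 from by omega]
  obtain ⟨m, rfl⟩ : ∃ m, k = m + 1 := ⟨k - 1, by omega⟩
  have p1 : (2 : ℕ) ^ (2 * (m + 1) - 1) = 2 * 2 ^ (2 * (m + 1) - 2) := by
    rw [show 2 * (m + 1) - 1 = 2 * m + 1 from by omega,
      show 2 * (m + 1) - 2 = 2 * m from by omega, pow_succ]; ring
  have p2 : (2 : ℕ) ^ (m + 1) = 2 * 2 ^ (m + 1 - 1) := by
    rw [show m + 1 - 1 = m from rfl, pow_succ]; ring
  rw [p1, p2] at h2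
  omega
end
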